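/- For every n ≥ 2, if H ⊆ P satisfies condition (H1) in the incidence geometry G_n, then the number N_2 of lines fully contained in H satisfies 6·N_2 = (4^{n−1} − 1)·(3|H| − (4^n − 1)). -/

import Mathlib

/-- The symplectic vector space `V_n = (ZMod 2)^(2n)` of the n-qubit real Pauli group. -/
abbrev V (n : ℕ) : Type := Fin (2 * n) → ZMod 2

/-- The index `2i-1` (0-based: `2i`). -/
def i0 {n : ℕ} (i : Fin n) : Fin (2 * n) := ⟨2 * i.1, by have := i.isLt; omega⟩

/-- The index `2i` (0-based: `2i+1`). -/
def i1 {n : ℕ} (i : Fin n) : Fin (2 * n) := ⟨2 * i.1 + 1, by have := i.isLt; omega⟩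

/-- The symplectic form `⟨x,y⟩ = Σ_{i=1}^n (x_{2i−1} y_{2i} + x_{2i} y_{2i−1})`. -/
def sform {n : ℕ} (x y : V n) : ZMod 2 :=
  ∑ i : Fin n, (x (i0 i) * y (i1 i) + x (i1 i) * y (i0 i))

/-- The point set `P = V_n \ {0}` of the incidence geometry `G_n`. -/
def P (n : ℕ) : Set (V n) := {x | x ≠ 0}

/-- The line set `L = {{a,b,a+b} : a,b ∈ P, a ≠ b, ⟨a,b⟩ = 0}` of `G_n`. -/
def Lines (n : ℕ) : Set (Set (V n)) :=
  {l | ∃ a b : V n, a ∈ P n ∧ b ∈ P n ∧ a ≠ b ∧ sform a b = 0 ∧ l = {a, b, a + b}}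

/-- A subset `H ⊆ P` satisfies condition (H1) if every line meets it in exactly
one point or is contained in it. -/
def IsH1 {n : ℕ} (H : Set (V n)) : Prop :=
  H ⊆ P n ∧ ∀ l ∈ Lines n, (H ∩ l).ncard = 1 ∨ l ⊆ H

/-- A geometric hyperplane: a subset satisfying (H1) which is not the full point set. -/
def IsHyperplane {n : ℕ} (H : Set (V n)) : Prop := IsH1 H ∧ H ≠ P n

/-- `A ⊞ B`: the complement in `P` of the symmetric difference of `A` and `B`. -/
def boxAdd {n : ℕ} (A B : Set (V n)) : Set (V n) := P n \ (symmDiff A B)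

/-- The quadratic form `Q_0(x) = Σ_{i=1}^n x_{2i−1} x_{2i}`. -/
def Q0 {n : ℕ} (x : V n) : ZMod 2 := ∑ i : Fin n, x (i0 i) * x (i1 i)

/-- The quadratic form `Q_p(x) = Q_0(x) + ⟨p,x⟩`. -/
def Qf {n : ℕ} (p x : V n) : ZMod 2 := Q0 x + sform p x

/-- The perp-set hyperplane `C_p = {x ∈ P : ⟨p,x⟩ = 0}`. -/
def Cset {n : ℕ} (p : V n) : Set (V n) := {x ∈ P n | sform p x = 0}

/-- The quadric hyperplane `H_p = {x ∈ P : Q_p(x) = 0}`. -/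
def Hset {n : ℕ} (p : V n) : Set (V n) := {x ∈ P n | Qf p x = 0}

/-- The symplectic transvection `t_p : x ↦ x + ⟨p,x⟩·p`. -/
def tv {n : ℕ} (p : V n) (x : V n) : V n := x + sform p x • p

open scoped Classical

lemma two_eq_zero : ∀ c : ZMod 2, c + c = 0 := by decide
lemma zmod2_cases : ∀ c : ZMod 2, c = 0 ∨ c = 1 := by decide

lemma add_self_V {n : ℕ} (x : V n) : x + x = 0 := by
  ext i; exact two_eq_zero _

lemma i0_ne_i1 {n : ℕ} (i j : Fin n) : i0 i ≠ i1 j := by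
  simp [i0, i1, Fin.ext_iff]; omega

lemma i1_inj {n : ℕ} (i j : Fin n) (h : i1 i = i1 j) : i = j := by
  simp [i1, Fin.ext_iff] at h; exact Fin.ext (by omega)

lemma i0_inj {n : ℕ} (i j : Fin n) (h : i0 i = i0 j) : i = j := by
  simp [i0, Fin.ext_iff] at h; exact Fin.ext (by omega)

lemma sform_symm {n : ℕ} (x y : V n) : sform x y = sform y x := by
  unfold sform; apply Finset.sum_congr rfl; intro i _; ring

lemma sform_self {n : ℕ} (x : V n) : sform x x = 0 := by
  unfold sform
  rw [Finset.sum_eq_zero]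
  intro i _
  rw [mul_comm (x (i1 i))]
  exact two_eq_zero _

lemma sform_add_right {n : ℕ} (x y z : V n) :
    sform x (y + z) = sform x y + sform x z := by
  unfold sform
  rw [← Finset.sum_add_distrib]
  apply Finset.sum_congr rfl; intro i _
  simp only [Pi.add_apply]; ring

lemma sform_zero_right {n : ℕ} (x : V n) : sform x 0 = 0 := by
  simp [sform]

lemma exists_one {n : ℕ} (a : V n) (ha : a ≠ 0) : ∃ e : V n, sform a e = 1 := by
  have hj : ∃ j, a j ≠ 0 := by
    by_contra h; push_neg at h; exact ha (funext fun j => h j)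
  obtain ⟨j, hj⟩ := hj
  have hj1 : a j = 1 := (zmod2_cases (a j)).resolve_left hj
  have hi : j.1 / 2 < n := by have := j.isLt; omega
  set i : Fin n := ⟨j.1 / 2, hi⟩ with hidef
  rcases Nat.even_or_odd j.1 with he | ho
  · obtain ⟨k, hk⟩ := he
    have hji : j = i0 i := by rw [Fin.ext_iff]; show j.1 = 2 * (j.1 / 2); omega
    refine ⟨Pi.single (i1 i) 1, ?_⟩
    unfold sform
    rw [Finset.sum_eq_single i]
    · rw [Pi.single_eq_same, Pi.single_eq_of_ne (i0_ne_i1 i i), mul_zero, mul_one,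
        add_zero, ← hji, hj1]
    · intro b _ hb
      rw [Pi.single_eq_of_ne (fun h => hb (i1_inj b i h)),
        Pi.single_eq_of_ne (i0_ne_i1 b i), mul_zero, mul_zero, add_zero]
    · intro h; exact absurd (Finset.mem_univ i) h
  · obtain ⟨k, hk⟩ := ho
    have hji : j = i1 i := by rw [Fin.ext_iff]; show j.1 = 2 * (j.1 / 2) + 1; omega
    refine ⟨Pi.single (i0 i) 1, ?_⟩
    unfold sform
    rw [Finset.sum_eq_single i]
    · rw [Pi.single_eq_same, Pi.single_eq_of_ne (Ne.symm (i0_ne_i1 i i)), mul_zero, mul_one,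
        zero_add, ← hji, hj1]
    · intro b _ hb
      rw [Pi.single_eq_of_ne (i0_ne_i1 i b).symm,
        Pi.single_eq_of_ne (fun h => hb (i0_inj b i h)), mul_zero, mul_zero, add_zero]
    · intro h; exact absurd (Finset.mem_univ i) h


noncomputable def kerF {n : ℕ} (a : V n) : Finset (V n) :=
  Finset.univ.filter (fun b => sform a b = 0)

noncomputable def orthF {n : ℕ} (a : V n) : Finset (V n) :=
  Finset.univ.filter (fun b => b ≠ 0 ∧ b ≠ a ∧ sform a b = 0)

lemma kerF_card {n : ℕ} (a : V n) (ha : a ≠ 0) : 2 * (kerF a).card = 2 ^ (2 * n) := by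
  unfold kerF
  obtain ⟨e, he⟩ := exists_one a ha
  have key : (Finset.univ.filter (fun b : V n => sform a b = 0)).card = (Finset.univ.filter (fun b : V n => ¬ sform a b = 0)).card := by
    apply Finset.card_bij' (fun b _ => b + e) (fun b _ => b + e)
    · intro b hb
      simp only [Finset.mem_filter, Finset.mem_univ, true_and] at hb ⊢
      rw [sform_add_right, hb, he]; decide
    · intro b hb
      simp only [Finset.mem_filter, Finset.mem_univ, true_and] at hb ⊢
      rcases zmod2_cases (sform a b) with h | h
      · exact absurd h hb
      · rw [sform_add_right, h, he]; decide
    · intro b _; rw [add_assoc, add_self_V, add_zero]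
    · intro b _; rw [add_assoc, add_self_V, add_zero]
  have hsplit := Finset.card_filter_add_card_filter_not
    (s := (Finset.univ : Finset (V n))) (p := fun b => sform a b = 0)
  have hcard : (Finset.univ : Finset (V n)).card = 2 ^ (2 * n) := by
    simp [Finset.card_univ]
  omega

lemma orthF_card {n : ℕ} (a : V n) (ha : a ≠ 0) (hn : 1 ≤ n) :
    (orthF a).card + 2 = 2 ^ (2 * n - 1) := by
  have h1 : kerF a = insert 0 (insert a (orthF a)) := by
    ext b
    simp only [kerF, orthF, Finset.mem_filter, Finset.mem_univ, true_and,
      Finset.mem_insert]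
    constructor
    · intro hb
      by_cases h0 : b = 0
      · exact Or.inl h0
      · by_cases hba : b = a
        · exact Or.inr (Or.inl hba)
        · exact Or.inr (Or.inr ⟨h0, hba, hb⟩)
    · rintro (rfl | rfl | ⟨_, _, h⟩)
      · simp [sform]
      · exact sform_self _
      · exact h
  have h0notin : (0 : V n) ∉ insert a (orthF a) := by
    simp only [Finset.mem_insert, orthF, Finset.mem_filter]
    rintro (h | ⟨_, h, _, _⟩)
    · exact ha h.symm
    · exact h rfl
  have hanotin : a ∉ orthF a := by
    simp only [orthF, Finset.mem_filter]
    rintro ⟨_, _, h, _⟩; exact h rfl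
  have hc : (kerF a).card = (orthF a).card + 2 := by
    rw [h1, Finset.card_insert_of_notMem h0notin, Finset.card_insert_of_notMem hanotin]
  have hk := kerF_card a ha
  have hpow : 2 ^ (2 * n) = 2 * 2 ^ (2 * n - 1) := by
    rw [← pow_succ']; congr 1; omega
  omega

def lineOf {n : ℕ} (a b : V n) : Set (V n) := {a, b, a + b}

noncomputable def TF {n : ℕ} (S : Finset (V n)) : Finset (V n × V n) :=
  Finset.univ.filter (fun x => x.1 ∈ S ∧ x.2 ≠ 0 ∧ x.2 ≠ x.1 ∧ sform x.1 x.2 = 0)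

lemma add_cancel_left {n : ℕ} (a b : V n) : a + (a + b) = b := by
  rw [← add_assoc, add_self_V, zero_add]

lemma fiber_pt {n : ℕ} (S : Finset (V n)) (l : Set (V n)) (p q r : V n)
    (hq0 : q ≠ 0) (hr0 : r ≠ 0) (hpq : p ≠ q) (hpr : p ≠ r)
    (opq : sform p q = 0) (opr : sform p r = 0) (hr : r = p + q) (hl : l = {p, q, r})
    (hpS : p ∈ S) :
    (TF S).filter (fun x => lineOf x.1 x.2 = l ∧ x.1 = p) = {(p, q), (p, r)} := by
  have hpr' : p + r = q := by rw [hr, add_cancel_left]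
  ext ⟨x1, x2⟩
  simp only [TF, Finset.mem_filter, Finset.mem_univ, true_and, Finset.mem_insert,
    Finset.mem_singleton, Prod.mk.injEq]
  constructor
  · rintro ⟨⟨hx1S, hx20, hx2ne, horth⟩, hline, rfl⟩
    have hx2l : x2 ∈ l := by
      rw [← hline]
      exact Or.inr (Or.inl rfl)
    rw [hl] at hx2l
    rcases hx2l with h | h | h
    · exact absurd h hx2ne
    · exact Or.inl ⟨rfl, h⟩
    · exact Or.inr ⟨rfl, h⟩
  · rintro (⟨rfl, rfl⟩ | ⟨rfl, rfl⟩)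
    · refine ⟨⟨hpS, hq0, fun h => hpq h.symm, opq⟩, ?_, rfl⟩
      rw [lineOf, hl, ← hr]
    · refine ⟨⟨hpS, hr0, fun h => hpr h.symm, opr⟩, ?_, rfl⟩
      rw [lineOf, hl, hpr']
      ext x
      simp only [Set.mem_insert_iff, Set.mem_singleton_iff]
      tauto


lemma ne_of_add {n : ℕ} {a b : V n} (h : a ≠ b) : a + b ≠ 0 := by
  intro h0
  apply h
  have h1 : b = a := by simpa [add_cancel_left] using congrArg (a + ·) h0
  exact h1.symm

lemma line_struct {n : ℕ} {l : Set (V n)} (hl : l ∈ Lines n) :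
    ∃ a b z : V n, z = a + b ∧ a ≠ 0 ∧ b ≠ 0 ∧ z ≠ 0 ∧ a ≠ b ∧ a ≠ z ∧ b ≠ z ∧
      sform a b = 0 ∧ sform a z = 0 ∧ sform b z = 0 ∧ l = {a, b, z} := by
  obtain ⟨a, b, ha, hb, hab, hs, hleq⟩ := hl
  refine ⟨a, b, a + b, rfl, ha, hb, ne_of_add hab, hab, ?_, ?_, hs, ?_, ?_, hleq⟩
  · intro h
    apply hb
    have := congrArg (a + ·) h
    simpa [add_cancel_left, add_self_V] using this.symm
  · intro h
    apply ha
    have : b + b = b + (a + b) := congrArg (b + ·) h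
    rw [add_self_V, add_comm a b, add_cancel_left] at this
    exact this.symm
  · rw [sform_add_right, sform_self, zero_add, hs]
  · rw [sform_add_right, sform_self, add_zero, sform_symm, hs]

lemma fiber_card {n : ℕ} (S : Finset (V n)) {l : Set (V n)} (hl : l ∈ Lines n) :
    ((TF S).filter (fun x => lineOf x.1 x.2 = l)).card = 2 * (S.filter (· ∈ l)).card := by
  obtain ⟨a, b, z, hz, ha0, hb0, hz0, hab, haz, hbz, oab, oaz, obz, hleq⟩ := line_struct hl
  rw [Finset.card_eq_sum_card_fiberwise (f := Prod.fst) (t := S.filter (· ∈ l))]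
  · have hterm : ∀ p ∈ S.filter (· ∈ l),
        (((TF S).filter (fun x => lineOf x.1 x.2 = l)).filter (fun x => x.1 = p)).card = 2 := by
      intro p hp
      rw [Finset.mem_filter] at hp
      obtain ⟨hpS, hpl⟩ := hp
      rw [Finset.filter_filter]
      have hpl' : p = a ∨ p = b ∨ p = z := by
        rw [hleq] at hpl
        simpa using hpl
      have card2 : ∀ q r : V n, q ≠ r → ({((p : V n), q), (p, r)} : Finset (V n × V n)).card = 2 := by
        intro q r hqr
        rw [Finset.card_insert_of_notMem (by simp [hqr]), Finset.card_singleton]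
      rcases hpl' with rfl | rfl | rfl
      · rw [fiber_pt S l p b z hb0 hz0 hab haz oab oaz hz hleq hpS]
        exact card2 b z hbz
      · rw [fiber_pt S l p z a hz0 ha0 hbz (Ne.symm hab) obz
          (sform_symm p a ▸ oab) (by rw [hz, add_comm a p, add_cancel_left])
          (by rw [hleq]; ext x; simp only [Set.mem_insert_iff, Set.mem_singleton_iff]; tauto) hpS]
        exact card2 z a (fun h => haz h.symm)
      · rw [fiber_pt S l p a b ha0 hb0 (Ne.symm haz) (Ne.symm hbz)
          (by rw [sform_symm]; exact oaz) (by rw [sform_symm]; exact obz)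
          (by rw [hz, add_comm (a + b) a, add_cancel_left])
          (by rw [hleq]; ext x; simp only [Set.mem_insert_iff, Set.mem_singleton_iff]; tauto) hpS]
        exact card2 a b hab
    rw [Finset.sum_congr rfl hterm, Finset.sum_const, smul_eq_mul, mul_comm]
  · intro x hx
    rw [Finset.mem_coe, Finset.mem_filter] at hx ⊢
    obtain ⟨hxT, hxl⟩ := hx
    rw [TF, Finset.mem_filter] at hxT
    refine ⟨hxT.2.1, ?_⟩
    rw [← hxl]
    exact Or.inl rfl


noncomputable def PFn (n : ℕ) : Finset (V n) := Finset.univ.filter (· ≠ 0)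

noncomputable def LFn (n : ℕ) : Finset (Set (V n)) := Finset.univ.filter (· ∈ Lines n)

lemma PFn_card (n : ℕ) : (PFn n).card + 1 = 2 ^ (2 * n) := by
  have h1 : PFn n = Finset.univ.erase 0 := by
    ext x; simp [PFn]
  rw [h1, Finset.card_erase_of_mem (Finset.mem_univ (0 : V n))]
  have h : (Finset.univ : Finset (V n)).card = 2 ^ (2 * n) := by simp [Finset.card_univ]
  have h2 : 1 ≤ (Finset.univ : Finset (V n)).card :=
    Finset.card_pos.mpr ⟨0, Finset.mem_univ 0⟩
  omega

lemma lineOf_mem_Lines {n : ℕ} {a b : V n} (ha : a ≠ 0) (hb : b ≠ 0) (hab : a ≠ b)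
    (hs : sform a b = 0) : lineOf a b ∈ Lines n :=
  ⟨a, b, ha, hb, hab, hs, rfl⟩

lemma TA {n : ℕ} (S : Finset (V n)) (hS : ∀ s ∈ S, s ≠ 0) (hn : 1 ≤ n) :
    (TF S).card = S.card * (2 ^ (2 * n - 1) - 2) := by
  rw [Finset.card_eq_sum_card_fiberwise (f := Prod.fst) (t := S)
    (fun x hx => ((Finset.mem_filter.mp hx).2).1)]
  have hterm : ∀ a ∈ S, ((TF S).filter (fun x => x.1 = a)).card = 2 ^ (2 * n - 1) - 2 := by
    intro a ha
    have heq : (TF S).filter (fun x => x.1 = a) = {a} ×ˢ orthF a := by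
      ext ⟨x1, x2⟩
      simp only [TF, orthF, Finset.mem_filter, Finset.mem_univ, true_and,
        Finset.mem_product, Finset.mem_singleton]
      constructor
      · rintro ⟨⟨h1S, h20, h2ne, ho⟩, rfl⟩
        exact ⟨rfl, h20, h2ne, ho⟩
      · rintro ⟨rfl, h20, h2ne, ho⟩
        exact ⟨⟨ha, h20, h2ne, ho⟩, rfl⟩
    rw [heq, Finset.card_product, Finset.card_singleton, one_mul]
    have := orthF_card a (hS a ha) hn
    omega
  rw [Finset.sum_congr rfl hterm, Finset.sum_const, smul_eq_mul]

lemma TB {n : ℕ} (S : Finset (V n)) (hS : ∀ s ∈ S, s ≠ 0) :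
    (TF S).card = ∑ l ∈ LFn n, 2 * (S.filter (· ∈ l)).card := by
  rw [Finset.card_eq_sum_card_fiberwise (f := fun x => lineOf x.1 x.2) (t := LFn n)]
  · refine Finset.sum_congr rfl fun l hl => ?_
    rw [LFn, Finset.mem_filter] at hl
    exact fiber_card S hl.2
  · intro x hx
    simp only [Finset.mem_coe, TF, Finset.mem_filter] at hx
    obtain ⟨_, h1S, h20, h2ne, ho⟩ := hx
    rw [Finset.mem_coe, LFn, Finset.mem_filter]
    exact ⟨Finset.mem_univ _, lineOf_mem_Lines (hS _ h1S) h20 (fun h => h2ne h.symm) ho⟩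

lemma count3 {n : ℕ} (S : Finset (V n)) {l : Set (V n)} (hl : l ∈ Lines n)
    (hcov : ∀ x ∈ l, x ∈ S) : (S.filter (· ∈ l)).card = 3 := by
  obtain ⟨a, b, z, hz, ha0, hb0, hz0, hab, haz, hbz, oab, oaz, obz, hleq⟩ := line_struct hl
  have heq : S.filter (· ∈ l) = {a, b, z} := by
    ext x
    simp only [Finset.mem_filter, Finset.mem_insert, Finset.mem_singleton]
    constructor
    · rintro ⟨_, hxl⟩
      rw [hleq] at hxl
      simpa using hxl
    · rintro (rfl | rfl | rfl) <;>
        exact ⟨hcov _ (by rw [hleq]; simp), by rw [hleq]; simp⟩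
  rw [heq, Finset.card_insert_of_notMem (by simp [hab, haz]),
    Finset.card_insert_of_notMem (by simp [hbz]), Finset.card_singleton]

lemma line_nonzero {n : ℕ} {l : Set (V n)} (hl : l ∈ Lines n) :
    ∀ x ∈ l, x ≠ (0 : V n) := by
  obtain ⟨a, b, z, hz, ha0, hb0, hz0, _, _, _, _, _, _, hleq⟩ := line_struct hl
  intro x hx
  rw [hleq] at hx
  rcases hx with rfl | rfl | rfl <;> assumption

theorem stmt2 (n : ℕ) (hn : 2 ≤ n) (H : Set (V n)) (hH : IsH1 H) :
    6 * ({l ∈ Lines n | l ⊆ H}.ncard : ℤ) =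
      ((4 : ℤ) ^ (n - 1) - 1) * (3 * (H.ncard : ℤ) - ((4 : ℤ) ^ n - 1)) := by
  have hn1 : 1 ≤ n := by omega
  set HF : Finset (V n) := H.toFinset with hHF
  set N2F : Finset (Set (V n)) := (LFn n).filter (fun l => l ⊆ H) with hN2F
  set MF : Finset (Set (V n)) := (LFn n).filter (fun l => ¬ l ⊆ H) with hMF
  -- nonzero conditions
  have hPn : ∀ s ∈ PFn n, s ≠ (0 : V n) := by
    intro s hs; rw [PFn, Finset.mem_filter] at hs; exact hs.2
  have hHn : ∀ s ∈ HF, s ≠ (0 : V n) := by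
    intro s hs
    rw [hHF, Set.mem_toFinset] at hs
    exact hH.1 hs
  -- ncard conversions
  have hN2 : ({l ∈ Lines n | l ⊆ H}).ncard = N2F.card := by
    rw [Set.ncard_eq_toFinset_card _ (Set.toFinite _)]
    congr 1
    ext l
    simp [Set.Finite.mem_toFinset, hN2F, LFn, Finset.mem_filter, Set.mem_setOf_eq]
  have hHc : H.ncard = HF.card := by
    rw [Set.ncard_eq_toFinset_card _ (Set.toFinite _)]
    congr 1
    ext x
    simp only [Set.Finite.mem_toFinset, hHF, Set.mem_toFinset]
  have hinter : ∀ l : Set (V n), (H ∩ l).ncard = (HF.filter (· ∈ l)).card := by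
    intro l
    rw [Set.ncard_eq_toFinset_card _ (Set.toFinite _)]
    congr 1
    ext x
    simp only [Set.Finite.mem_toFinset, hHF, Finset.mem_filter, Set.mem_toFinset,
      Set.mem_inter_iff]
  -- Equation 1 : Pc * c = 6 * Lc
  have e1 : (PFn n).card * (2 ^ (2 * n - 1) - 2) = 6 * (LFn n).card := by
    rw [← TA (PFn n) hPn hn1, TB (PFn n) hPn]
    rw [Finset.sum_congr rfl (fun l hl => ?_), Finset.sum_const, smul_eq_mul, mul_comm]
    rw [LFn, Finset.mem_filter] at hl
    rw [count3 (PFn n) hl.2 (fun x hx => by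
      rw [PFn, Finset.mem_filter]
      exact ⟨Finset.mem_univ _, line_nonzero hl.2 x hx⟩)]
  -- Equation 2 : h * c = 6 * N2 + 2 * M
  have e2 : HF.card * (2 ^ (2 * n - 1) - 2) = 6 * N2F.card + 2 * MF.card := by
    rw [← TA HF hHn hn1, TB HF hHn]
    rw [← Finset.sum_filter_add_sum_filter_not (LFn n) (fun l => l ⊆ H)]
    have hA : ∀ l ∈ (LFn n).filter (fun l => l ⊆ H),
        2 * (HF.filter (· ∈ l)).card = 6 := by
      intro l hl
      rw [Finset.mem_filter, LFn, Finset.mem_filter] at hl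
      rw [count3 HF hl.1.2 (fun x hx => by
        rw [hHF, Set.mem_toFinset]; exact hl.2 hx)]
    have hB : ∀ l ∈ (LFn n).filter (fun l => ¬ l ⊆ H),
        2 * (HF.filter (· ∈ l)).card = 2 := by
      intro l hl
      rw [Finset.mem_filter, LFn, Finset.mem_filter] at hl
      have := (hH.2 l hl.1.2).resolve_right hl.2
      rw [hinter l] at this
      rw [this]
    rw [Finset.sum_congr rfl hA, Finset.sum_congr rfl hB,
      Finset.sum_const, Finset.sum_const, smul_eq_mul, smul_eq_mul,
      ← hN2F, ← hMF, mul_comm N2F.card 6, mul_comm MF.card 2]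
  -- Equation 3
  have e3 : N2F.card + MF.card = (LFn n).card := by
    rw [hN2F, hMF]
    exact Finset.card_filter_add_card_filter_not (p := fun l => l ⊆ H)
  -- Integer versions
  set F : ℤ := 2 ^ (2 * n - 2) with hFdef
  have hc2 : 2 ≤ 2 ^ (2 * n - 1) := by
    calc 2 = 2 ^ 1 := rfl
    _ ≤ 2 ^ (2 * n - 1) := Nat.pow_le_pow_right (by norm_num) (by omega)
  have hD : ((2 ^ (2 * n - 1) - 2 : ℕ) : ℤ) = 2 * F - 2 := by
    have hpow : (2 : ℕ) ^ (2 * n - 1) = 2 * 2 ^ (2 * n - 2) := by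
      rw [← pow_succ']; congr 1; omega
    rw [Nat.cast_sub hc2, hpow, hFdef]
    push_cast
    ring
  have hE : ((PFn n).card : ℤ) = 4 * F - 1 := by
    have := PFn_card n
    have hcast : ((PFn n).card : ℤ) + 1 = 2 ^ (2 * n) := by exact_mod_cast this
    have hp : (2 : ℤ) ^ (2 * n) = 4 * F := by
      rw [hFdef, show (4 : ℤ) = 2 ^ 2 from rfl, ← pow_add]
      congr 1
      omega
    linarith
  have hA : ((PFn n).card : ℤ) * ((2 ^ (2 * n - 1) - 2 : ℕ) : ℤ)
      = 6 * ((LFn n).card : ℤ) := by exact_mod_cast e1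
  have hB : (HF.card : ℤ) * ((2 ^ (2 * n - 1) - 2 : ℕ) : ℤ)
      = 6 * (N2F.card : ℤ) + 2 * (MF.card : ℤ) := by exact_mod_cast e2
  have hC : (N2F.card : ℤ) + (MF.card : ℤ) = ((LFn n).card : ℤ) := by exact_mod_cast e3
  rw [hD] at hA hB
  rw [hE] at hA
  have hF1 : (4 : ℤ) ^ (n - 1) = F := by
    rw [hFdef, show (4 : ℤ) = 2 ^ 2 from rfl, ← pow_mul]
    congr 1
    omega
  have hF2 : (4 : ℤ) ^ n = 4 * F := by
    rw [hFdef, show (4 : ℤ) = 2 ^ 2 from rfl, ← pow_mul, ← pow_add]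
    congr 1
    omega
  rw [hN2, hHc, hF1, hF2]
  have hdouble : 2 * (6 * (N2F.card : ℤ)) =
      2 * ((F - 1) * (3 * (HF.card : ℤ) - (4 * F - 1))) := by
    linear_combination hA - 3 * hB - 6 * hC
  linarith
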